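/- Let V be a finite-dimensional ℂ-vector space, let f be a ℂ-linear automorphism of V, and let W be a subspace of V with f(W) = W. Let a and b be distinct positive real numbers such that every eigenvalue of the restriction of f to W has absolute value a and every eigenvalue of the endomorphism induced by f on the quotient V/W has absolute value b. Then there exists exactly one subspace U of V with f(U) = U, W ∩ U = 0 and W + U = V. -/

import Mathlib

open Polynomial

section Aux

variable {V : Type*} [AddCommGroup V] [Module ℂ V]

lemma myAeval_mkQ (W : Submodule ℂ V) (g : V →ₗ[ℂ] V) (h : ∀ x ∈ W, g x ∈ W)
    (s : ℂ[X]) (x : V) :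
    aeval (Submodule.mapQ W W g h) s (W.mkQ x) = W.mkQ (aeval g s x) := by
  induction s using Polynomial.induction_on' with
  | add p q hp hq => simp only [map_add, LinearMap.add_apply, ← Submodule.mkQ_apply, hp, hq, Submodule.coe_add]
  | monomial n c =>
    simp only [aeval_monomial, Module.End.mul_apply, Module.algebraMap_end_apply, map_smul]
    rw [← Submodule.mapQ_pow (p := W) (f := g) h n]
    simp [Submodule.mapQ_apply, Submodule.mkQ_apply]

lemma myAeval_restrict (W : Submodule ℂ V) (g : V →ₗ[ℂ] V) (h : ∀ x ∈ W, g x ∈ W)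
    (s : ℂ[X]) (x : W) :
    ((aeval (g.restrict h) s x : W) : V) = aeval g s (x : V) := by
  induction s using Polynomial.induction_on' with
  | add p q hp hq => simp only [map_add, LinearMap.add_apply, ← Submodule.mkQ_apply, hp, hq, Submodule.coe_add]
  | monomial n c =>
    simp only [aeval_monomial, Module.End.mul_apply, Module.algebraMap_end_apply]
    rw [Module.End.pow_restrict n h]
    simp [LinearMap.restrict_apply]

/-- For `x` in a stable submodule, the minimal polynomial of the restriction kills `x`. -/
lemma myAeval_minpoly_restrict_eq_zero (W : Submodule ℂ V) (g : V →ₗ[ℂ] V)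
    (h : ∀ x ∈ W, g x ∈ W) {x : V} (hx : x ∈ W) :
    aeval g (minpoly ℂ (g.restrict h)) x = 0 := by
  have := myAeval_restrict W g h (minpoly ℂ (g.restrict h)) ⟨x, hx⟩
  rw [minpoly.aeval] at this
  simpa using this.symm

/-- A stable submodule is stable under any polynomial in `g`. -/
lemma myAeval_mem (W : Submodule ℂ V) (g : V →ₗ[ℂ] V)
    (h : ∀ x ∈ W, g x ∈ W) (s : ℂ[X]) {x : V} (hx : x ∈ W) :
    aeval g s x ∈ W := by
  have := myAeval_restrict W g h s ⟨x, hx⟩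
  rw [← this]
  exact (aeval (g.restrict h) s ⟨x, hx⟩).2

end Aux

lemma myCoprime {a b : ℝ} (hab : a ≠ b) {p q : ℂ[X]} (hp : p ≠ 0)
    (hpa : ∀ μ, p.IsRoot μ → ‖μ‖ = a) (hqb : ∀ μ, q.IsRoot μ → ‖μ‖ = b) :
    IsCoprime p q := by
  classical
  by_contra hcon
  have hgu : ¬ IsUnit (EuclideanDomain.gcd p q) :=
    fun h => hcon (EuclideanDomain.gcd_isUnit_iff.mp h)
  have hg0 : EuclideanDomain.gcd p q ≠ 0 :=
    fun h => hp (EuclideanDomain.gcd_eq_zero_iff.mp h).1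
  have hdeg : (EuclideanDomain.gcd p q).degree ≠ 0 := by
    intro h
    exact hgu (Polynomial.isUnit_iff_degree_eq_zero.mpr h)
  obtain ⟨z, hz⟩ := Complex.isAlgClosed.exists_root _ hdeg
  have hzp : p.IsRoot z := by
    obtain ⟨c, hc⟩ := EuclideanDomain.gcd_dvd_left p q
    rw [hc]
    simpa using Or.inl hz
  have hzq : q.IsRoot z := by
    obtain ⟨c, hc⟩ := EuclideanDomain.gcd_dvd_right p q
    rw [hc]
    simpa using Or.inl hz
  exact hab ((hpa z hzp) ▸ (hqb z hzq))

/-- Existence and uniqueness of an `f`-stable complement when the eigenvalues on the subspace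
and on the quotient have distinct absolute values. -/
theorem statement13 {V : Type*} [AddCommGroup V] [Module ℂ V] [FiniteDimensional ℂ V]
    (f : V ≃ₗ[ℂ] V) (W : Submodule ℂ V)
    (hfW : ∀ x ∈ W, f.toLinearMap x ∈ W)
    (hfW' : Submodule.map f.toLinearMap W = W)
    (a b : ℝ) (ha : 0 < a) (hb : 0 < b) (hab : a ≠ b)
    (hWa : ∀ μ : ℂ, Module.End.HasEigenvalue (f.toLinearMap.restrict hfW) μ →
      ‖μ‖ = a)
    (hVb : ∀ μ : ℂ, Module.End.HasEigenvalue (Submodule.mapQ W W f.toLinearMap hfW) μ →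
      ‖μ‖ = b) :
    ∃! U : Submodule ℂ V,
      Submodule.map f.toLinearMap U = U ∧ W ⊓ U = ⊥ ∧ W ⊔ U = ⊤ := by
  classical
  set g := f.toLinearMap with hgdef
  set gW := g.restrict hfW with hgW
  set gQ := Submodule.mapQ W W g hfW with hgQ
  set p := minpoly ℂ gW with hpdef
  set q := minpoly ℂ gQ with hqdef
  have key : ∀ (s t : ℂ[X]) (x : V), aeval g (s * t) x = aeval g s (aeval g t x) := by
    intro s t x
    rw [map_mul]
    rfl
  have hproots : ∀ μ, p.IsRoot μ → ‖μ‖ = a := fun μ h =>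
    hWa μ (Module.End.hasEigenvalue_iff_isRoot.mpr h)
  have hqroots : ∀ μ, q.IsRoot μ → ‖μ‖ = b := fun μ h =>
    hVb μ (Module.End.hasEigenvalue_iff_isRoot.mpr h)
  have hp0 : p ≠ 0 := minpoly.ne_zero (LinearMap.isIntegral gW)
  have hWker : ∀ x ∈ W, aeval g p x = 0 := fun x hx =>
    myAeval_minpoly_restrict_eq_zero W g hfW hx
  have hQmem : ∀ x : V, aeval g q x ∈ W := by
    intro x
    have h1 := myAeval_mkQ W g hfW q x
    have h0 : aeval gQ q = 0 := minpoly.aeval ℂ gQ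
    rw [h0, LinearMap.zero_apply] at h1
    rw [← Submodule.Quotient.mk_eq_zero W, ← Submodule.mkQ_apply]
    exact h1.symm
  have hpq : ∀ x : V, aeval g (p * q) x = 0 := fun x => by
    rw [key]; exact hWker _ (hQmem x)
  obtain ⟨u, v, huv⟩ := myCoprime hab hp0 hproots hqroots
  set U₀ := LinearMap.ker (aeval g q) with hU₀def
  -- decomposition of any x
  have hdecomp : ∀ x : V, x = aeval g u (aeval g p x) + aeval g v (aeval g q x) := by
    intro x
    have h' : aeval g (u * p + v * q) x = aeval g u (aeval g p x) + aeval g v (aeval g q x) := by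
      rw [map_add, LinearMap.add_apply, key, key]
    rw [← h', huv]
    simp
  -- g-stability of U₀
  have hgq_comm : ∀ x : V, aeval g q (g x) = g (aeval g q x) := by
    intro x
    have h1 : aeval g (q * X) x = aeval g (X * q) x := by rw [mul_comm]
    rw [key, key, aeval_X] at h1
    exact h1
  have h1 : Submodule.map g U₀ = U₀ := by
    have hle : Submodule.map g U₀ ≤ U₀ := by
      rw [Submodule.map_le_iff_le_comap]
      intro x hx
      rw [hU₀def, LinearMap.mem_ker] at hx
      rw [Submodule.mem_comap, hU₀def, LinearMap.mem_ker, hgq_comm, hx, map_zero]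
    refine Submodule.eq_of_le_of_finrank_le hle ?_
    rw [show Submodule.map g U₀ = Submodule.map (f : V →ₗ[ℂ] V) U₀ from rfl,
      LinearEquiv.finrank_map_eq f U₀]
  have h2 : W ⊓ U₀ = ⊥ := by
    rw [eq_bot_iff]
    intro x hx
    rw [Submodule.mem_inf] at hx
    obtain ⟨hxW, hxU⟩ := hx
    rw [hU₀def, LinearMap.mem_ker] at hxU
    have hd := hdecomp x
    rw [hWker x hxW, hxU, map_zero, map_zero, add_zero] at hd
    rw [Submodule.mem_bot]
    exact hd
  have h3 : W ⊔ U₀ = ⊤ := by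
    rw [eq_top_iff]
    intro x _
    have hx := hdecomp x
    have hmem1 : aeval g v (aeval g q x) ∈ W := myAeval_mem W g hfW v (hQmem x)
    have hmem2 : aeval g u (aeval g p x) ∈ U₀ := by
      rw [hU₀def, LinearMap.mem_ker]
      have e1 : aeval g q (aeval g u (aeval g p x)) = aeval g (q * (u * p)) x := by
        rw [key, key]
      have e2 : (q * (u * p) : ℂ[X]) = u * (p * q) := by ring
      rw [e1, e2, key, hpq, map_zero]
    rw [hx]
    exact Submodule.add_mem _ (Submodule.mem_sup_right hmem2) (Submodule.mem_sup_left hmem1)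
  refine ⟨U₀, ⟨h1, h2, h3⟩, ?_⟩
  rintro U ⟨hU1, hU2, hU3⟩
  -- uniqueness
  have hUst : ∀ x ∈ U, g x ∈ U := fun x hx => hU1 ▸ Submodule.mem_map_of_mem hx
  set gU := g.restrict hUst with hgUdef
  set r := minpoly ℂ gU with hrdef
  have hrroots : ∀ μ, r.IsRoot μ → ‖μ‖ = b := by
    intro μ hμ
    have hev : Module.End.HasEigenvalue gU μ := Module.End.hasEigenvalue_iff_isRoot.mpr hμ
    obtain ⟨x, hx⟩ := hev.exists_hasEigenvector
    have hgx : g ↑x = μ • (↑x : V) := by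
      have h := hx.apply_eq_smul
      have h' := congrArg (Subtype.val) h
      have h'' : ((gU x : U) : V) = μ • (x : V) := by simpa using h'
      exact h''
    have hx0 : (↑x : V) ≠ 0 := fun h => hx.2 (Subtype.ext h)
    have hxq : W.mkQ ↑x ≠ 0 := by
      rw [Submodule.mkQ_apply, Ne, Submodule.Quotient.mk_eq_zero]
      intro hmem
      have : (↑x : V) ∈ W ⊓ U := ⟨hmem, x.2⟩
      rw [hU2] at this
      exact hx0 this
    refine hVb μ (Module.End.hasEigenvalue_of_hasEigenvector
      ⟨Module.End.mem_eigenspace_iff.mpr ?_, hxq⟩)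
    show gQ (W.mkQ ↑x) = μ • W.mkQ ↑x
    rw [Submodule.mkQ_apply, hgQ, Submodule.mapQ_apply, hgx]
    exact Submodule.Quotient.mk_smul W μ ↑x
  obtain ⟨c, d, hcd⟩ := myCoprime hab hp0 hproots hrroots
  have hUle : U ≤ U₀ := by
    intro x hx
    have hrx : aeval g r x = 0 := myAeval_minpoly_restrict_eq_zero U g hUst hx
    have hxx : x = aeval g c (aeval g p x) := by
      have h' : aeval g (c * p + d * r) x = aeval g c (aeval g p x) + aeval g d (aeval g r x) := by
        rw [map_add, LinearMap.add_apply, key, key]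
      have h'' : aeval g (c * p + d * r) x = x := by rw [hcd]; simp
      conv_lhs => rw [← h'']
      rw [h', hrx, map_zero, add_zero]
    rw [hU₀def, LinearMap.mem_ker, hxx]
    have e1 : aeval g q (aeval g c (aeval g p x)) = aeval g (q * (c * p)) x := by
      rw [key, key]
    have e2 : (q * (c * p) : ℂ[X]) = c * (p * q) := by ring
    rw [e1, e2, key, hpq, map_zero]
  have hC1 : IsCompl W U := ⟨disjoint_iff.mpr hU2, codisjoint_iff.mpr hU3⟩
  have hC2 : IsCompl W U₀ := ⟨disjoint_iff.mpr h2, codisjoint_iff.mpr h3⟩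
  have hfr1 := Submodule.finrank_add_eq_of_isCompl hC1
  have hfr2 := Submodule.finrank_add_eq_of_isCompl hC2
  exact Submodule.eq_of_le_of_finrank_le hUle (by omega)
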